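/- Region equivalence on ℝ² defined by matching integer parts (capped at cmax) and the ordering of fractional parts is an equivalence relation with finitely many classes, and it is compatible with resets: if ν₁ and ν₂ are equivalent and the same subset of coordinates is reset to 0 in both, the resulting valuations are equivalent. -/
import Mathlib


/-- Nonnegative valuations on two variables. -/
def Val : Type := {v : ℝ × ℝ // 0 ≤ v.1 ∧ 0 ≤ v.2}

/-- Two coordinate values match: either both exceed `cmax`, or they have the
same integer part and their fractional parts are simultaneously zero. -/
def coordEq (cmax : ℕ) (a b : ℝ) : Prop :=
  ((cmax : ℝ) < a ∧ (cmax : ℝ) < b) ∨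
    (⌊a⌋ = ⌊b⌋ ∧ (Int.fract a = 0 ↔ Int.fract b = 0))

/-- Region equivalence on `ℝ≥0²`: matching capped integer parts, zero-ness of
fractional parts, and the ordering of fractional parts (for coordinates with
non-integer values at most `cmax`). -/
def regEquiv (cmax : ℕ) (v w : Val) : Prop :=
  coordEq cmax v.1.1 w.1.1 ∧ coordEq cmax v.1.2 w.1.2 ∧
  ((v.1.1 ≤ (cmax : ℝ) ∧ v.1.2 ≤ (cmax : ℝ) ∧
      Int.fract v.1.1 ≠ 0 ∧ Int.fract v.1.2 ≠ 0) →
    ((Int.fract v.1.1 ≤ Int.fract v.1.2 ↔ Int.fract w.1.1 ≤ Int.fract w.1.2) ∧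
     (Int.fract v.1.2 ≤ Int.fract v.1.1 ↔ Int.fract w.1.2 ≤ Int.fract w.1.1)))

/-- Reset the chosen subset of coordinates to `0`. -/
def resetVal (bx bY : Bool) (v : Val) : Val :=
  ⟨(if bx then 0 else v.1.1, if bY then 0 else v.1.2), by
    constructor
    · dsimp only; split
      · exact le_refl 0
      · exact v.2.1
    · dsimp only; split
      · exact le_refl 0
      · exact v.2.2⟩

open Classical in
/-- Signature of a single coordinate. -/
noncomputable def sc (cmax : ℕ) (a : ℝ) (ha : 0 ≤ a) : Option (Fin (cmax + 1) × Prop) :=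
  if h : (cmax : ℝ) < a then none
  else some (⟨⌊a⌋.toNat, by
    have h1 : ⌊a⌋ ≤ (cmax : ℤ) := by
      have := Int.floor_le_floor (le_of_not_gt h)
      simpa using this
    have h2 : (0 : ℤ) ≤ ⌊a⌋ := Int.floor_nonneg.mpr ha
    omega⟩, Int.fract a = 0)

lemma floor_eq_cmax_of (cmax : ℕ) {a : ℝ} (h1 : (cmax : ℝ) < a) {b : ℝ}
    (h2 : ¬ (cmax : ℝ) < b) (hfl : ⌊a⌋ = ⌊b⌋)
    (hfr : Int.fract a = 0 ↔ Int.fract b = 0) : False := by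
  have hac : (cmax : ℤ) ≤ ⌊a⌋ := Int.le_floor.mpr (by exact_mod_cast h1.le)
  have hbc : ⌊b⌋ ≤ (cmax : ℤ) := by
    have := Int.floor_le_floor (le_of_not_gt h2)
    simpa using this
  have heq : ⌊a⌋ = (cmax : ℤ) := le_antisymm (hfl ▸ hbc) hac
  have hbeq : ⌊b⌋ = (cmax : ℤ) := hfl ▸ heq
  have hfb : Int.fract b = 0 := by
    have h3 : b - (cmax : ℝ) ≤ 0 := by linarith [le_of_not_gt h2]
    have h4 : 0 ≤ Int.fract b := Int.fract_nonneg b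
    have : Int.fract b = b - (cmax : ℝ) := by
      rw [Int.fract, hbeq]; push_cast; ring
    linarith [this ▸ h4, this ▸ h3]
  have hfa : Int.fract a ≠ 0 := by
    have : Int.fract a = a - (cmax : ℝ) := by
      rw [Int.fract, heq]; push_cast; ring
    rw [this]; intro hc; linarith
  exact hfa (hfr.mpr hfb)

lemma coordEq_iff_sc (cmax : ℕ) (a b : ℝ) (ha : 0 ≤ a) (hb : 0 ≤ b) :
    coordEq cmax a b ↔ sc cmax a ha = sc cmax b hb := by
  unfold coordEq sc
  by_cases h1 : (cmax : ℝ) < a <;> by_cases h2 : (cmax : ℝ) < b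
  · rw [dif_pos h1, dif_pos h2]; simp [h1, h2]
  · rw [dif_pos h1, dif_neg h2]
    constructor
    · rintro (⟨_, hb2⟩ | ⟨hfl, hfr⟩)
      · exact absurd hb2 h2
      · exact (floor_eq_cmax_of cmax h1 h2 hfl hfr).elim
    · intro h; simp at h
  · rw [dif_neg h1, dif_pos h2]
    constructor
    · rintro (⟨ha2, _⟩ | ⟨hfl, hfr⟩)
      · exact absurd ha2 h1
      · exact (floor_eq_cmax_of cmax h2 h1 hfl.symm hfr.symm).elim
    · intro h; simp at h
  · rw [dif_neg h1, dif_neg h2]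
    simp only [h1, h2, false_and, false_or, Option.some.injEq, Prod.mk.injEq]
    constructor
    · rintro ⟨hfl, hfr⟩
      exact ⟨by simp [Fin.mk.injEq, hfl], propext hfr⟩
    · rintro ⟨hfl, hfr⟩
      simp only [Fin.mk.injEq] at hfl
      have h3 : (0 : ℤ) ≤ ⌊a⌋ := Int.floor_nonneg.mpr ha
      have h4 : (0 : ℤ) ≤ ⌊b⌋ := Int.floor_nonneg.mpr hb
      exact ⟨by omega, iff_of_eq hfr⟩

lemma sc_aux (cmax : ℕ) (a b : ℝ) (ha : 0 ≤ a) (hb : 0 ≤ b)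
    (h : sc cmax a ha = sc cmax b hb) :
    ((a ≤ (cmax : ℝ)) ↔ (b ≤ (cmax : ℝ))) ∧
    ((a ≤ (cmax : ℝ)) → (Int.fract a = 0 ↔ Int.fract b = 0)) := by
  unfold sc at h
  by_cases h1 : (cmax : ℝ) < a <;> by_cases h2 : (cmax : ℝ) < b
  · exact ⟨by simp [not_le.mpr h1, not_le.mpr h2],
      fun h3 => absurd h3 (not_le.mpr h1)⟩
  · rw [dif_pos h1, dif_neg h2] at h; exact absurd h (by simp)
  · rw [dif_neg h1, dif_pos h2] at h; exact absurd h (by simp)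
  · rw [dif_neg h1, dif_neg h2] at h
    simp only [Option.some.injEq, Prod.mk.injEq] at h
    exact ⟨by simp [le_of_not_gt h1, le_of_not_gt h2], fun _ => iff_of_eq h.2⟩

open Classical in
noncomputable def sig (cmax : ℕ) (v : Val) :
    Option (Fin (cmax + 1) × Prop) × Option (Fin (cmax + 1) × Prop) × Option (Prop × Prop) :=
  (sc cmax v.1.1 v.2.1, sc cmax v.1.2 v.2.2,
    if (v.1.1 ≤ (cmax : ℝ) ∧ v.1.2 ≤ (cmax : ℝ) ∧
        Int.fract v.1.1 ≠ 0 ∧ Int.fract v.1.2 ≠ 0) then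
      some (Int.fract v.1.1 ≤ Int.fract v.1.2, Int.fract v.1.2 ≤ Int.fract v.1.1)
    else none)

lemma regEquiv_iff_sig (cmax : ℕ) (v w : Val) :
    regEquiv cmax v w ↔ sig cmax v = sig cmax w := by
  classical
  unfold regEquiv sig
  constructor
  · rintro ⟨h1, h2, h3⟩
    have hs1 := (coordEq_iff_sc cmax _ _ v.2.1 w.2.1).mp h1
    have hs2 := (coordEq_iff_sc cmax _ _ v.2.2 w.2.2).mp h2
    have a1 := sc_aux cmax _ _ v.2.1 w.2.1 hs1
    have a2 := sc_aux cmax _ _ v.2.2 w.2.2 hs2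
    refine Prod.ext hs1 (Prod.ext hs2 ?_)
    dsimp only
    by_cases hv : (v.1.1 ≤ (cmax : ℝ) ∧ v.1.2 ≤ (cmax : ℝ) ∧
        Int.fract v.1.1 ≠ 0 ∧ Int.fract v.1.2 ≠ 0)
    · have hw : (w.1.1 ≤ (cmax : ℝ) ∧ w.1.2 ≤ (cmax : ℝ) ∧
          Int.fract w.1.1 ≠ 0 ∧ Int.fract w.1.2 ≠ 0) :=
        ⟨a1.1.mp hv.1, a2.1.mp hv.2.1, fun hc => hv.2.2.1 ((a1.2 hv.1).mpr hc),
          fun hc => hv.2.2.2 ((a2.2 hv.2.1).mpr hc)⟩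
      rw [if_pos hv, if_pos hw]
      obtain ⟨i1, i2⟩ := h3 hv
      exact congrArg _ (Prod.ext (propext i1) (propext i2))
    · have hw : ¬ (w.1.1 ≤ (cmax : ℝ) ∧ w.1.2 ≤ (cmax : ℝ) ∧
          Int.fract w.1.1 ≠ 0 ∧ Int.fract w.1.2 ≠ 0) := by
        intro hw
        exact hv ⟨a1.1.mpr hw.1, a2.1.mpr hw.2.1,
          fun hc => hw.2.2.1 ((a1.2 (a1.1.mpr hw.1)).mp hc),
          fun hc => hw.2.2.2 ((a2.2 (a2.1.mpr hw.2.1)).mp hc)⟩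
      rw [if_neg hv, if_neg hw]
  · intro h
    have hs1 : sc cmax v.1.1 v.2.1 = sc cmax w.1.1 w.2.1 := congrArg Prod.fst h
    have hs2 : sc cmax v.1.2 v.2.2 = sc cmax w.1.2 w.2.2 :=
      congrArg Prod.fst (congrArg Prod.snd h)
    have hs3 := congrArg Prod.snd (congrArg Prod.snd h)
    refine ⟨(coordEq_iff_sc cmax _ _ v.2.1 w.2.1).mpr hs1,
      (coordEq_iff_sc cmax _ _ v.2.2 w.2.2).mpr hs2, ?_⟩
    intro hv
    have a1 := sc_aux cmax _ _ v.2.1 w.2.1 hs1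
    have a2 := sc_aux cmax _ _ v.2.2 w.2.2 hs2
    have hw : (w.1.1 ≤ (cmax : ℝ) ∧ w.1.2 ≤ (cmax : ℝ) ∧
        Int.fract w.1.1 ≠ 0 ∧ Int.fract w.1.2 ≠ 0) :=
      ⟨a1.1.mp hv.1, a2.1.mp hv.2.1, fun hc => hv.2.2.1 ((a1.2 hv.1).mpr hc),
        fun hc => hv.2.2.2 ((a2.2 hv.2.1).mpr hc)⟩
    rw [if_pos hv, if_pos hw] at hs3
    simp only [Option.some.injEq, Prod.mk.injEq] at hs3
    exact ⟨iff_of_eq hs3.1, iff_of_eq hs3.2⟩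

lemma regEquiv_refl (cmax : ℕ) (v : Val) : regEquiv cmax v v :=
  (regEquiv_iff_sig cmax v v).mpr rfl

/-- Region equivalence is an equivalence relation with finitely many classes,
and it is compatible with resets. -/
theorem stmt_15 (cmax : ℕ) :
    Equivalence (regEquiv cmax) ∧
    Finite (Quot (regEquiv cmax)) ∧
    (∀ v w : Val, regEquiv cmax v w → ∀ bx bY : Bool,
      regEquiv cmax (resetVal bx bY v) (resetVal bx bY w)) := by
  refine ⟨⟨regEquiv_refl cmax, ?_, ?_⟩, ?_, ?_⟩
  · intro v w h
    exact (regEquiv_iff_sig cmax w v).mpr ((regEquiv_iff_sig cmax v w).mp h).symm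
  · intro u v w h1 h2
    exact (regEquiv_iff_sig cmax u w).mpr
      (((regEquiv_iff_sig cmax u v).mp h1).trans ((regEquiv_iff_sig cmax v w).mp h2))
  · have hinj : Function.Injective
        (Quot.lift (sig cmax) (fun v w h => (regEquiv_iff_sig cmax v w).mp h)) := by
      intro q1 q2
      induction q1 using Quot.ind with | _ v =>
      induction q2 using Quot.ind with | _ w =>
      intro h
      exact Quot.sound ((regEquiv_iff_sig cmax v w).mpr h)
    exact Finite.of_injective _ hinj
  · intro v w h bx bY
    have hzero : Int.fract (0 : ℝ) = 0 := by simp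
    have hc0 : coordEq cmax 0 0 := Or.inr ⟨rfl, Iff.rfl⟩
    obtain ⟨h1, h2, h3⟩ := h
    cases bx <;> cases bY <;>
      simp only [resetVal, regEquiv, Bool.false_eq_true, if_true, if_false]
    · exact ⟨h1, h2, h3⟩
    · exact ⟨h1, hc0, fun hv => absurd hzero hv.2.2.2⟩
    · exact ⟨hc0, h2, fun hv => absurd hzero hv.2.2.1⟩
    · exact ⟨hc0, hc0, fun hv => absurd hzero hv.2.2.1⟩
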